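/- Let K be a field, let S ⊆ ℕ² be a nonempty finite set with convex hull P = conv(S) ⊆ ℝ², let d ≥ 1 be an integer, and enumerate the lattice points of P as P ∩ ℤ² = {(a₀,b₀), …, (a_m,b_m)}. If f ∈ K[s,t] is a polynomial whose support is contained in d•P (i.e., every exponent vector (α,β) with nonzero coefficient in f lies in d•P = {d·p : p ∈ P}), then there exists a homogeneous polynomial g ∈ K[X₀, …, X_m] of degree d such that f(s,t) = g(s^{a₀} t^{b₀}, …, s^{a_m} t^{b_m}). -/

import Mathlib

open Pointwise MvPolynomial

namespace ToricAux


noncomputable section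

/-- cast from integer lattice to the real plane -/
def zr (p : ℤ × ℤ) : ℝ × ℝ := ((p.1 : ℝ), (p.2 : ℝ))

lemma zr_injective : Function.Injective zr := by
  intro p q h
  have h1 : (p.1 : ℝ) = q.1 := congrArg Prod.fst h
  have h2 : (p.2 : ℝ) = q.2 := congrArg Prod.snd h
  exact Prod.ext (by exact_mod_cast h1) (by exact_mod_cast h2)

/-- convex hull of (the real image of) a finite set of lattice points -/
def hull (V : Finset (ℤ × ℤ)) : Set (ℝ × ℝ) := convexHull ℝ ↑(V.image zr)

/-- the lattice points of a subset of the plane -/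
def latt (A : Set (ℝ × ℝ)) : Set (ℤ × ℤ) := {p | zr p ∈ A}

lemma hull_mono {V W : Finset (ℤ × ℤ)} (h : V ⊆ W) : hull V ⊆ hull W :=
  convexHull_mono (by exact_mod_cast Finset.coe_subset.2 (Finset.image_subset_image h))

lemma mem_hull_of_mem {V : Finset (ℤ × ℤ)} {p : ℤ × ℤ} (h : p ∈ V) : zr p ∈ hull V :=
  subset_convexHull ℝ _ (by exact Finset.mem_coe.2 (Finset.mem_image_of_mem zr h))

end



variable {E : Type*} [AddCommGroup E] [Module ℝ E]

lemma mem_convexHull_of_weights {s : Finset E} {w : E → ℝ} {x : E}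
    (h0 : ∀ y ∈ s, 0 ≤ w y) (h1 : ∑ y ∈ s, w y = 1) (hx : ∑ y ∈ s, w y • y = x) :
    x ∈ convexHull ℝ (s : Set E) := by
  rw [Finset.convexHull_eq]
  refine ⟨w, h0, h1, ?_⟩
  rw [Finset.centerMass_eq_of_sum_1 _ _ h1]
  simpa using hx

lemma weights_of_mem_convexHull {s : Finset E} {x : E}
    (hx : x ∈ convexHull ℝ (s : Set E)) :
    ∃ w : E → ℝ, (∀ y ∈ s, 0 ≤ w y) ∧ ∑ y ∈ s, w y = 1 ∧ ∑ y ∈ s, w y • y = x := by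
  rw [Finset.convexHull_eq] at hx
  obtain ⟨w, h0, h1, hcm⟩ := hx
  refine ⟨w, h0, h1, ?_⟩
  rw [Finset.centerMass_eq_of_sum_1 _ _ h1] at hcm
  simpa using hcm

/-- stellar subdivision: a point of `conv t` lies in one of the cones from `w`. -/
lemma stellar [DecidableEq E] (t : Finset E) (w : E) (hwt : w ∉ t)
    (hw : w ∈ convexHull ℝ (t : Set E)) {x : E} (hx : x ∈ convexHull ℝ (t : Set E)) :
    ∃ v ∈ t, x ∈ convexHull ℝ ((insert w (t.erase v) : Finset E) : Set E) := by
  obtain ⟨lam, hl0, hl1, hlx⟩ := weights_of_mem_convexHull hx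
  obtain ⟨mu, hm0, hm1, hmw⟩ := weights_of_mem_convexHull hw
  have hns : (t.filter fun u => 0 < mu u).Nonempty := by
    by_contra h
    rw [Finset.not_nonempty_iff_eq_empty] at h
    have : ∑ u ∈ t, mu u = 0 := by
      apply Finset.sum_eq_zero
      intro u hu
      by_contra hne
      have h2 : 0 < mu u := lt_of_le_of_ne (hm0 u hu) (Ne.symm hne)
      have : u ∈ t.filter fun u => 0 < mu u := Finset.mem_filter.2 ⟨hu, h2⟩
      simp [h] at this
    rw [hm1] at this; norm_num at this
  obtain ⟨v, hvf, hvmin⟩ := Finset.exists_min_image _ (fun u => lam u / mu u) hns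
  obtain ⟨hvt, hvmu⟩ := Finset.mem_filter.1 hvf
  set c := lam v / mu v with hc
  have hc0 : 0 ≤ c := div_nonneg (hl0 v hvt) (le_of_lt hvmu)
  have hcv : c * mu v = lam v := div_mul_cancel₀ _ (ne_of_gt hvmu)
  refine ⟨v, hvt, ?_⟩
  have hwe : w ∉ t.erase v := fun h => hwt (Finset.mem_of_mem_erase h)
  set nu : E → ℝ := fun u => if u = w then c else lam u - c * mu u with hnu
  apply mem_convexHull_of_weights (w := nu) (x := x)
  · intro u hu
    rcases Finset.mem_insert.1 hu with rfl | hu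
    · simp [hnu, hc0]
    · have hut : u ∈ t := Finset.mem_of_mem_erase hu
      have hune : u ≠ w := fun h => hwe (by rw [← h]; exact hu)
      simp only [hnu, if_neg hune]
      rcases lt_or_ge 0 (mu u) with hmu | hmu
      · have h3 := hvmin u (Finset.mem_filter.2 ⟨hut, hmu⟩)
        have : c * mu u ≤ lam u := by
          rw [hc]
          calc lam v / mu v * mu u ≤ lam u / mu u * mu u :=
                mul_le_mul_of_nonneg_right h3 (le_of_lt hmu)
          _ = lam u := div_mul_cancel₀ _ (ne_of_gt hmu)
        linarith
      · have hmu0 : mu u = 0 := le_antisymm hmu (hm0 u hut)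
        simp [hmu0]
        exact hl0 u hut
  · rw [Finset.sum_insert hwe]
    simp only [hnu, if_pos rfl]
    have h4 : ∀ u ∈ t.erase v, (if u = w then c else lam u - c * mu u) = lam u - c * mu u := by
      intro u hu
      rw [if_neg (fun h => hwe (by rw [← h]; exact hu))]
    rw [Finset.sum_congr rfl h4, Finset.sum_sub_distrib, Finset.sum_erase_eq_sub hvt,
      Finset.sum_erase_eq_sub hvt, ← Finset.mul_sum, hm1, hl1, hcv]
    ring
  · rw [Finset.sum_insert hwe]
    simp only [hnu, if_pos rfl]
    have h4 : ∀ u ∈ t.erase v, (if u = w then c else lam u - c * mu u) • u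
        = lam u • u - (c * mu u) • u := by
      intro u hu
      rw [if_neg (fun h => hwe (by rw [← h]; exact hu)), sub_smul]
    rw [Finset.sum_congr rfl h4, Finset.sum_sub_distrib, Finset.sum_erase_eq_sub hvt,
      Finset.sum_erase_eq_sub hvt, hlx]
    have h5 : ∀ u ∈ t, (c * mu u) • u = c • (mu u • u) := by
      intro u _; rw [mul_smul]
    rw [Finset.sum_congr rfl h5, ← Finset.smul_sum, hmw, hcv]
    abel

/-- a vertex is not in the piece of the subdivision from which it was removed. -/
lemma vertex_not_mem [DecidableEq E] (t : Finset E) (v w : E) (hvt : v ∈ t) (hwt : w ∉ t)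
    (hv : v ∉ convexHull ℝ ((t.erase v : Finset E) : Set E))
    (hw : w ∈ convexHull ℝ (t : Set E)) :
    v ∉ convexHull ℝ ((insert w (t.erase v) : Finset E) : Set E) := by
  intro hmem
  obtain ⟨lam, hl0, hl1, hlx⟩ := weights_of_mem_convexHull hmem
  obtain ⟨mu, hm0, hm1, hmw⟩ := weights_of_mem_convexHull hw
  have hwe : w ∉ t.erase v := fun h => hwt (Finset.mem_of_mem_erase h)
  set c := lam w with hcdef
  have hc0 : 0 ≤ c := hl0 w (Finset.mem_insert_self _ _)
  have hc1 : c ≤ 1 := by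
    rw [← hl1]
    exact Finset.single_le_sum (fun u hu => hl0 u hu) (Finset.mem_insert_self _ _)
  have hmv0 : 0 ≤ mu v := hm0 v hvt
  have hmuv1 : mu v ≤ 1 := by
    rw [← hm1]
    exact Finset.single_le_sum (fun u hu => hm0 u hu) hvt
  set nu : E → ℝ := fun u => c * mu u + (if u = v then 0 else lam u) with hnudef
  have hsum_lam : ∑ u ∈ t.erase v, lam u = 1 - c := by
    have h := hl1
    rw [Finset.sum_insert hwe] at h
    linarith
  have hsum_lams : ∑ u ∈ t.erase v, lam u • u = v - c • w := by
    have h := hlx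
    rw [Finset.sum_insert hwe] at h
    rw [eq_sub_iff_add_eq, add_comm]
    exact h
  have hnu0 : ∀ u ∈ t, 0 ≤ nu u := by
    intro u hu
    have h1 : 0 ≤ c * mu u := mul_nonneg hc0 (hm0 u hu)
    by_cases h : u = v
    · simp only [hnudef, if_pos h, add_zero]; exact h1
    · simp only [hnudef, if_neg h]
      have : 0 ≤ lam u :=
        hl0 u (Finset.mem_insert_of_mem (Finset.mem_erase.2 ⟨h, hu⟩))
      linarith
  have hite : ∀ (g : E → ℝ), (∑ u ∈ t, if u = v then 0 else g u) = ∑ u ∈ t.erase v, g u := by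
    intro g
    rw [← Finset.add_sum_erase t _ hvt, if_pos rfl, zero_add]
    exact Finset.sum_congr rfl fun u hu => if_neg (Finset.mem_erase.1 hu).1
  have hnusum : ∑ u ∈ t, nu u = 1 := by
    simp only [hnudef]
    rw [Finset.sum_add_distrib, ← Finset.mul_sum, hm1, hite lam, hsum_lam]
    ring
  have hnusmul : ∑ u ∈ t, nu u • u = v := by
    simp only [hnudef, add_smul]
    rw [Finset.sum_add_distrib]
    have h1 : ∑ u ∈ t, (c * mu u) • u = c • w := by
      have : ∀ u ∈ t, (c * mu u) • u = c • (mu u • u) := fun u _ => mul_smul _ _ _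
      rw [Finset.sum_congr rfl this, ← Finset.smul_sum, hmw]
    have h2 : ∑ u ∈ t, (if u = v then 0 else lam u) • u = v - c • w := by
      rw [← hsum_lams, ← Finset.add_sum_erase t _ hvt, if_pos rfl, zero_smul, zero_add]
      exact Finset.sum_congr rfl fun u hu => by rw [if_neg (Finset.mem_erase.1 hu).1]
    rw [h1, h2]; abel
  have hnuv : nu v = c * mu v := by simp [hnudef]
  have hle : c * mu v ≤ 1 := mul_le_one₀ hc1 hmv0 hmuv1
  rcases eq_or_lt_of_le hle with heq | hlt
  · -- c * mu v = 1 forces c = 1, mu v = 1, so v = w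
    have hc : c = 1 := by nlinarith
    have hlam0 : ∀ u ∈ t.erase v, lam u = 0 := by
      have hz : ∑ u ∈ t.erase v, lam u = 0 := by rw [hsum_lam, hc]; ring
      intro u hu
      have := (Finset.sum_eq_zero_iff_of_nonneg (fun u hu =>
        hl0 u (Finset.mem_insert_of_mem hu))).1 hz
      exact this u hu
    have : v - c • w = 0 := by
      rw [← hsum_lams]
      apply Finset.sum_eq_zero
      intro u hu
      rw [hlam0 u hu, zero_smul]
    rw [hc, one_smul, sub_eq_zero] at this
    exact hwt (this ▸ hvt)
  · -- nu v < 1 : v is a convex combination of t.erase v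
    set s := 1 - nu v with hsdef
    have hs0 : 0 < s := by rw [hsdef, hnuv]; linarith
    have hsum_e : ∑ u ∈ t.erase v, nu u = s := by
      rw [hsdef, ← hnusum, ← Finset.add_sum_erase t nu hvt]
      ring
    have hsmul_e : ∑ u ∈ t.erase v, nu u • u = v - nu v • v := by
      have h := Finset.add_sum_erase t (fun u => nu u • u) hvt
      rw [hnusmul] at h
      rw [eq_sub_iff_add_eq, add_comm]
      exact h
    apply hv
    apply mem_convexHull_of_weights (w := fun u => nu u / s) (x := v)
    · intro u hu
      exact div_nonneg (hnu0 u (Finset.mem_of_mem_erase hu)) (le_of_lt hs0)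
    · rw [← Finset.sum_div, hsum_e, div_self (ne_of_gt hs0)]
    · have : ∀ u ∈ t.erase v, (nu u / s) • u = s⁻¹ • (nu u • u) := by
        intro u _
        rw [div_eq_inv_mul, mul_smul]
      rw [Finset.sum_congr rfl this, ← Finset.smul_sum, hsmul_e]
      have : v - nu v • v = s • v := by
        rw [hsdef, sub_smul, one_smul]
      rw [this, ← mul_smul, inv_mul_cancel₀ (ne_of_gt hs0), one_smul]


noncomputable section

/-- from affine independence of three points: no nontrivial vanishing combination
of the difference vectors. -/
lemma indep_vec {x y z : ℝ × ℝ} (hxy : x ≠ y) (hxz : x ≠ z) (hyz : y ≠ z)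
    (hai : AffineIndependent ℝ ((↑) : ({x, y, z} : Finset (ℝ × ℝ)) → ℝ × ℝ))
    {μ ν : ℝ} (h : μ • (y - x) + ν • (z - x) = 0) : μ = 0 ∧ ν = 0 := by
  classical
  set t : Finset (ℝ × ℝ) := {x, y, z} with ht
  set w' : (ℝ × ℝ) → ℝ := fun u => if u = x then -μ - ν else if u = y then μ else ν with hw'
  have hxt : x ∈ t := by simp [ht]
  have hyt : y ∈ t := by simp [ht]
  have hzt : z ∈ t := by simp [ht]
  have wx : w' x = -μ - ν := by simp [hw']
  have wy : w' y = μ := by simp [hw', Ne.symm hxy]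
  have wz : w' z = ν := by simp [hw', Ne.symm hxz, Ne.symm hyz]
  have hsum : ∑ i : t, w' ↑i = 0 := by
    rw [Finset.sum_coe_sort t w']
    rw [ht, Finset.sum_insert (by simp [hxy, hxz]), Finset.sum_insert (by simp [hyz]),
      Finset.sum_singleton, wx, wy, wz]
    ring
  have hvsub : Finset.univ.weightedVSub ((↑) : t → ℝ × ℝ) (fun i => w' ↑i) = 0 := by
    rw [Finset.weightedVSub_eq_linear_combination _ hsum]
    have : ∑ i : t, w' ↑i • (i : ℝ × ℝ) = ∑ u ∈ t, w' u • u :=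
      Finset.sum_coe_sort t (fun u => w' u • u)
    rw [this, ht, Finset.sum_insert (by simp [hxy, hxz]), Finset.sum_insert (by simp [hyz]),
      Finset.sum_singleton, wx, wy, wz]
    have expand : (-μ - ν) • x + (μ • y + ν • z) = μ • (y - x) + ν • (z - x) := by
      module
    rw [expand, h]
  have hall := hai Finset.univ (fun i => w' ↑i) hsum hvsub
  have hy0 : w' y = 0 := hall ⟨y, hyt⟩ (Finset.mem_univ _)
  have hz0 : w' z = 0 := hall ⟨z, hzt⟩ (Finset.mem_univ _)
  rw [wy] at hy0
  rw [wz] at hz0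
  exact ⟨hy0, hz0⟩

end


noncomputable section

lemma image_triple (v1 v2 v3 : ℤ × ℤ) :
    ({v1, v2, v3} : Finset (ℤ × ℤ)).image zr = {zr v1, zr v2, zr v3} := by
  simp [Finset.image_insert]

lemma mem_hull_triple {v1 v2 v3 : ℤ × ℤ} (h12 : v1 ≠ v2) (h13 : v1 ≠ v3) (h23 : v2 ≠ v3)
    {s t : ℝ} (hs : 0 ≤ s) (ht : 0 ≤ t) (hst : s + t ≤ 1) (p : ℤ × ℤ)
    (hp1 : (p.1 : ℝ) = v1.1 + s * ((v2.1 : ℝ) - v1.1) + t * ((v3.1 : ℝ) - v1.1))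
    (hp2 : (p.2 : ℝ) = v1.2 + s * ((v2.2 : ℝ) - v1.2) + t * ((v3.2 : ℝ) - v1.2)) :
    zr p ∈ hull {v1, v2, v3} := by
  have e12 : zr v1 ≠ zr v2 := fun h => h12 (zr_injective h)
  have e13 : zr v1 ≠ zr v3 := fun h => h13 (zr_injective h)
  have e23 : zr v2 ≠ zr v3 := fun h => h23 (zr_injective h)
  rw [hull, image_triple]
  set w' : (ℝ × ℝ) → ℝ := fun u => if u = zr v1 then 1 - s - t else if u = zr v2 then s else t
    with hw'
  have wx : w' (zr v1) = 1 - s - t := by simp [hw']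
  have wy : w' (zr v2) = s := by simp [hw', Ne.symm e12]
  have wz : w' (zr v3) = t := by simp [hw', Ne.symm e13, Ne.symm e23]
  apply mem_convexHull_of_weights (w := w')
  · intro u hu
    simp only [Finset.mem_insert, Finset.mem_singleton] at hu
    rcases hu with rfl | rfl | rfl
    · rw [wx]; linarith
    · rw [wy]; exact hs
    · rw [wz]; exact ht
  · rw [Finset.sum_insert (by simp [e12, e13]), Finset.sum_insert (by simp [e23]),
      Finset.sum_singleton, wx, wy, wz]
    ring
  · rw [Finset.sum_insert (by simp [e12, e13]), Finset.sum_insert (by simp [e23]),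
      Finset.sum_singleton, wx, wy, wz]
    apply Prod.ext
    · simp only [Prod.fst_add, Prod.smul_fst, smul_eq_mul, zr]
      linarith [hp1]
    · simp only [Prod.snd_add, Prod.smul_snd, smul_eq_mul, zr]
      linarith [hp2]

lemma rep_lemma {v1 v2 v3 : ℤ × ℤ}
    (hbase : ∀ p : ℤ × ℤ, zr p ∈ hull {v1, v2, v3} → p ∈ ({v1, v2, v3} : Finset (ℤ × ℤ)))
    (hD : (v2.1 - v1.1) * (v3.2 - v1.2) - (v2.2 - v1.2) * (v3.1 - v1.1) ≠ 0)
    (z : ℤ × ℤ) :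
    ∃ m n : ℤ, z.1 = m * (v2.1 - v1.1) + n * (v3.1 - v1.1) ∧
               z.2 = m * (v2.2 - v1.2) + n * (v3.2 - v1.2) := by
  have h12 : v1 ≠ v2 := by
    rintro rfl; apply hD; ring
  have h13 : v1 ≠ v3 := by
    rintro rfl; apply hD; ring
  have h23 : v2 ≠ v3 := by
    rintro rfl; apply hD; ring
  obtain ⟨den, hden⟩ : ∃ x : ℝ, x = ((v2.1 : ℝ) - v1.1) * ((v3.2 : ℝ) - v1.2)
      - ((v2.2 : ℝ) - v1.2) * ((v3.1 : ℝ) - v1.1) := ⟨_, rfl⟩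
  have hden0 : den ≠ 0 := by
    rw [hden]
    intro h
    apply hD
    have : (((v2.1 - v1.1) * (v3.2 - v1.2) - (v2.2 - v1.2) * (v3.1 - v1.1) : ℤ) : ℝ) = 0 := by
      push_cast
      linear_combination h
    exact_mod_cast this
  obtain ⟨al, hal⟩ : ∃ x : ℝ, x = ((z.1 : ℝ) * ((v3.2 : ℝ) - v1.2)
      - (z.2 : ℝ) * ((v3.1 : ℝ) - v1.1)) / den := ⟨_, rfl⟩
  obtain ⟨be, hbe⟩ : ∃ x : ℝ, x = (((v2.1 : ℝ) - v1.1) * (z.2 : ℝ)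
      - ((v2.2 : ℝ) - v1.2) * (z.1 : ℝ)) / den := ⟨_, rfl⟩
  have h1 : al * ((v2.1 : ℝ) - v1.1) + be * ((v3.1 : ℝ) - v1.1) = z.1 := by
    rw [hal, hbe]
    field_simp
    rw [hden]
    ring
  have h2 : al * ((v2.2 : ℝ) - v1.2) + be * ((v3.2 : ℝ) - v1.2) = z.2 := by
    rw [hal, hbe]
    field_simp
    rw [hden]
    ring
  obtain ⟨fa, hfa⟩ : ∃ x : ℝ, x = Int.fract al := ⟨_, rfl⟩
  obtain ⟨fb, hfb⟩ : ∃ x : ℝ, x = Int.fract be := ⟨_, rfl⟩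
  have hfa' : fa = al - ⌊al⌋ := hfa
  have hfb' : fb = be - ⌊be⌋ := hfb
  have hfa0 : 0 ≤ fa := hfa ▸ Int.fract_nonneg al
  have hfb0 : 0 ≤ fb := hfb ▸ Int.fract_nonneg be
  have hfa1 : fa < 1 := hfa ▸ Int.fract_lt_one al
  have hfb1 : fb < 1 := hfb ▸ Int.fract_lt_one be
  obtain ⟨z', hz'⟩ : ∃ p : ℤ × ℤ, p = (z.1 - (⌊al⌋ * (v2.1 - v1.1) + ⌊be⌋ * (v3.1 - v1.1)),
      z.2 - (⌊al⌋ * (v2.2 - v1.2) + ⌊be⌋ * (v3.2 - v1.2))) := ⟨_, rfl⟩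
  have hz'1 : z'.1 = z.1 - (⌊al⌋ * (v2.1 - v1.1) + ⌊be⌋ * (v3.1 - v1.1)) := by rw [hz']
  have hz'2 : z'.2 = z.2 - (⌊al⌋ * (v2.2 - v1.2) + ⌊be⌋ * (v3.2 - v1.2)) := by rw [hz']
  have hr1 : (z'.1 : ℝ) = fa * ((v2.1 : ℝ) - v1.1) + fb * ((v3.1 : ℝ) - v1.1) := by
    rw [hz'1, hfa', hfb']
    push_cast
    linear_combination -h1
  have hr2 : (z'.2 : ℝ) = fa * ((v2.2 : ℝ) - v1.2) + fb * ((v3.2 : ℝ) - v1.2) := by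
    rw [hz'2, hfa', hfb']
    push_cast
    linear_combination -h2
  have finish : ∀ m n : ℤ, z'.1 = m * (v2.1 - v1.1) + n * (v3.1 - v1.1) →
      z'.2 = m * (v2.2 - v1.2) + n * (v3.2 - v1.2) →
      ∃ m n : ℤ, z.1 = m * (v2.1 - v1.1) + n * (v3.1 - v1.1) ∧
                 z.2 = m * (v2.2 - v1.2) + n * (v3.2 - v1.2) := by
    intro m n e1 e2
    rw [hz'1] at e1
    rw [hz'2] at e2
    exact ⟨⌊al⌋ + m, ⌊be⌋ + n, by linear_combination e1, by linear_combination e2⟩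
  rcases le_or_gt (fa + fb) 1 with hcase | hcase
  · obtain ⟨p, hp⟩ : ∃ p : ℤ × ℤ, p = (v1.1 + z'.1, v1.2 + z'.2) := ⟨_, rfl⟩
    have hpmem : p ∈ ({v1, v2, v3} : Finset (ℤ × ℤ)) := by
      apply hbase
      apply mem_hull_triple h12 h13 h23 hfa0 hfb0 hcase
      · rw [hp]; push_cast; linear_combination hr1
      · rw [hp]; push_cast; linear_combination hr2
    rw [hp] at hpmem
    simp only [Finset.mem_insert, Finset.mem_singleton, Prod.ext_iff] at hpmem
    rcases hpmem with ⟨e1, e2⟩ | ⟨e1, e2⟩ | ⟨e1, e2⟩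
    · exact finish 0 0 (by linear_combination e1) (by linear_combination e2)
    · exact finish 1 0 (by linear_combination e1) (by linear_combination e2)
    · exact finish 0 1 (by linear_combination e1) (by linear_combination e2)
  · obtain ⟨q, hq⟩ : ∃ q : ℤ × ℤ, q = (v1.1 + (v2.1 - v1.1) + (v3.1 - v1.1) - z'.1,
        v1.2 + (v2.2 - v1.2) + (v3.2 - v1.2) - z'.2) := ⟨_, rfl⟩
    have hqmem : q ∈ ({v1, v2, v3} : Finset (ℤ × ℤ)) := by
      apply hbase
      apply mem_hull_triple h12 h13 h23 (s := 1 - fa) (t := 1 - fb)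
        (by linarith) (by linarith) (by linarith)
      · rw [hq]; push_cast; linear_combination -hr1
      · rw [hq]; push_cast; linear_combination -hr2
    rw [hq] at hqmem
    simp only [Finset.mem_insert, Finset.mem_singleton, Prod.ext_iff] at hqmem
    rcases hqmem with ⟨e1, e2⟩ | ⟨e1, e2⟩ | ⟨e1, e2⟩
    · exact finish 1 1 (by linear_combination -e1) (by linear_combination -e2)
    · exact finish 0 1 (by linear_combination -e1) (by linear_combination -e2)
    · exact finish 1 0 (by linear_combination -e1) (by linear_combination -e2)

lemma unimodular {v1 v2 v3 : ℤ × ℤ}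
    (hbase : ∀ p : ℤ × ℤ, zr p ∈ hull {v1, v2, v3} → p ∈ ({v1, v2, v3} : Finset (ℤ × ℤ)))
    (hD : (v2.1 - v1.1) * (v3.2 - v1.2) - (v2.2 - v1.2) * (v3.1 - v1.1) ≠ 0) :
    (v2.1 - v1.1) * (v3.2 - v1.2) - (v2.2 - v1.2) * (v3.1 - v1.1) = 1 ∨
    (v2.1 - v1.1) * (v3.2 - v1.2) - (v2.2 - v1.2) * (v3.1 - v1.1) = -1 := by
  obtain ⟨m1, n1, h11, h12⟩ := rep_lemma hbase hD ((1, 0) : ℤ × ℤ)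
  obtain ⟨m2, n2, h21, h22⟩ := rep_lemma hbase hD ((0, 1) : ℤ × ℤ)
  simp only at h11 h12 h21 h22
  have key : (m1 * n2 - n1 * m2) *
      ((v2.1 - v1.1) * (v3.2 - v1.2) - (v2.2 - v1.2) * (v3.1 - v1.1)) = 1 := by
    have e : (m1 * (v2.1 - v1.1) + n1 * (v3.1 - v1.1)) * (m2 * (v2.2 - v1.2) + n2 * (v3.2 - v1.2))
        - (m1 * (v2.2 - v1.2) + n1 * (v3.2 - v1.2)) * (m2 * (v2.1 - v1.1) + n2 * (v3.1 - v1.1))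
        = (m1 * n2 - n1 * m2) *
          ((v2.1 - v1.1) * (v3.2 - v1.2) - (v2.2 - v1.2) * (v3.1 - v1.1)) := by ring
    rw [← h11, ← h12, ← h21, ← h22] at e
    linarith [e]
  have : IsUnit ((v2.1 - v1.1) * (v3.2 - v1.2) - (v2.2 - v1.2) * (v3.1 - v1.1)) :=
    IsUnit.of_mul_eq_one (m1 * n2 - n1 * m2) (by linear_combination key)
  exact Int.isUnit_iff.mp this

end


noncomputable section

lemma image_pair (u v : ℤ × ℤ) :
    ({u, v} : Finset (ℤ × ℤ)).image zr = {zr u, zr v} := by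
  simp [Finset.image_insert]

lemma mem_hull_pair {u v : ℤ × ℤ} (huv : u ≠ v) {s : ℝ} (hs : 0 ≤ s) (hs1 : s ≤ 1) (p : ℤ × ℤ)
    (hp1 : (p.1 : ℝ) = u.1 + s * ((v.1 : ℝ) - u.1))
    (hp2 : (p.2 : ℝ) = u.2 + s * ((v.2 : ℝ) - u.2)) :
    zr p ∈ hull {u, v} := by
  have e : zr u ≠ zr v := fun h => huv (zr_injective h)
  rw [hull, image_pair]
  set w' : (ℝ × ℝ) → ℝ := fun q => if q = zr u then 1 - s else s with hw'
  have wu : w' (zr u) = 1 - s := by simp [hw']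
  have wv : w' (zr v) = s := by simp [hw', Ne.symm e]
  apply mem_convexHull_of_weights (w := w')
  · intro q hq
    simp only [Finset.mem_insert, Finset.mem_singleton] at hq
    rcases hq with rfl | rfl
    · rw [wu]; linarith
    · rw [wv]; exact hs
  · rw [Finset.sum_insert (by simp [e]), Finset.sum_singleton, wu, wv]; ring
  · rw [Finset.sum_insert (by simp [e]), Finset.sum_singleton, wu, wv]
    apply Prod.ext
    · simp only [Prod.fst_add, Prod.smul_fst, smul_eq_mul, zr]
      linarith [hp1]
    · simp only [Prod.snd_add, Prod.smul_snd, smul_eq_mul, zr]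
      linarith [hp2]

lemma singleton_case (v : ℤ × ℤ) (d : ℕ) (x : ℤ × ℤ) {y : ℝ × ℝ}
    (hy : y ∈ hull {v}) (hdy : (d : ℝ) • y = zr x) :
    ∃ l : Multiset (ℤ × ℤ), Multiset.card l = d ∧ (∀ p ∈ l, zr p ∈ hull {v}) ∧ l.sum = x := by
  have : hull {v} = {zr v} := by
    rw [hull]
    simp [convexHull_singleton]
  rw [this] at hy
  rw [Set.mem_singleton_iff] at hy
  subst hy
  have h1 : (d : ℝ) * v.1 = x.1 := congrArg Prod.fst hdy
  have h2 : (d : ℝ) * v.2 = x.2 := congrArg Prod.snd hdy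
  have hx1 : (d : ℤ) * v.1 = x.1 := by exact_mod_cast h1
  have hx2 : (d : ℤ) * v.2 = x.2 := by exact_mod_cast h2
  refine ⟨Multiset.replicate d v, Multiset.card_replicate _ _, ?_, ?_⟩
  · intro p hp
    rw [Multiset.eq_of_mem_replicate hp, this]
    rfl
  · rw [Multiset.sum_replicate]
    apply Prod.ext
    · simpa [nsmul_eq_mul] using hx1
    · simpa [nsmul_eq_mul] using hx2

lemma segment_case {u v : ℤ × ℤ} (huv : u ≠ v)
    (hbase : ∀ p : ℤ × ℤ, zr p ∈ hull {u, v} → p ∈ ({u, v} : Finset (ℤ × ℤ)))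
    (d : ℕ) (x : ℤ × ℤ) {y : ℝ × ℝ}
    (hy : y ∈ hull {u, v}) (hdy : (d : ℝ) • y = zr x) :
    ∃ l : Multiset (ℤ × ℤ), Multiset.card l = d ∧ (∀ p ∈ l, zr p ∈ hull {u, v}) ∧ l.sum = x := by
  have e : zr u ≠ zr v := fun h => huv (zr_injective h)
  -- extract weights
  rw [hull, image_pair] at hy
  obtain ⟨lam, hl0, hl1, hls⟩ := weights_of_mem_convexHull hy
  rw [Finset.sum_insert (by simp [e]), Finset.sum_singleton] at hl1 hls
  have hlu := hl0 (zr u) (by simp)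
  have hlv := hl0 (zr v) (by simp)
  have hy1 : lam (zr u) * u.1 + lam (zr v) * v.1 = y.1 := by
    have := congrArg Prod.fst hls
    simpa [zr] using this
  have hy2 : lam (zr u) * u.2 + lam (zr v) * v.2 = y.2 := by
    have := congrArg Prod.snd hls
    simpa [zr] using this
  have hx1 : (d : ℝ) * y.1 = x.1 := congrArg Prod.fst hdy
  have hx2 : (d : ℝ) * y.2 = x.2 := congrArg Prod.snd hdy
  -- the primitive direction
  set g : ℕ := Int.gcd (v.1 - u.1) (v.2 - u.2) with hgdef
  have hgne : g ≠ 0 := by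
    rw [hgdef]
    intro h
    rw [Int.gcd_eq_zero_iff] at h
    apply huv
    have h1 : v.1 = u.1 := by omega
    have h2 : v.2 = u.2 := by omega
    exact Prod.ext h1.symm h2.symm
  obtain ⟨q1, hq1⟩ : ((g : ℤ)) ∣ (v.1 - u.1) := Int.gcd_dvd_left _ _
  obtain ⟨q2, hq2⟩ : ((g : ℤ)) ∣ (v.2 - u.2) := Int.gcd_dvd_right _ _
  have hg1 : g = 1 := by
    have hgr : (0 : ℝ) < (g : ℝ) := by
      have : 0 < g := Nat.pos_of_ne_zero hgne
      exact_mod_cast this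
    have hmem : ((u.1 + q1, u.2 + q2) : ℤ × ℤ) ∈ ({u, v} : Finset (ℤ × ℤ)) := by
      apply hbase
      apply mem_hull_pair huv (s := 1 / (g : ℝ)) (by positivity)
        (by rw [div_le_one hgr]; exact_mod_cast Nat.one_le_iff_ne_zero.2 hgne) _ ?_ ?_
      · have : ((v.1 : ℝ) - u.1) = (g : ℝ) * q1 := by exact_mod_cast hq1
        push_cast
        rw [this]
        field_simp
      · have : ((v.2 : ℝ) - u.2) = (g : ℝ) * q2 := by exact_mod_cast hq2
        push_cast
        rw [this]
        field_simp
    simp only [Finset.mem_insert, Finset.mem_singleton, Prod.ext_iff] at hmem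
    rcases hmem with ⟨e1, e2⟩ | ⟨e1, e2⟩
    · exfalso
      apply huv
      have hq10 : q1 = 0 := by omega
      have hq20 : q2 = 0 := by omega
      rw [hq10, mul_zero] at hq1
      rw [hq20, mul_zero] at hq2
      exact Prod.ext (by omega) (by omega)
    · -- q1 = v.1 - u.1, q2 = v.2 - u.2; then (g-1) * qi = 0
      have hq1' : ((g : ℤ) - 1) * q1 = 0 := by
        have : q1 = v.1 - u.1 := by omega
        rw [this] at hq1 ⊢
        linear_combination -hq1
      have hq2' : ((g : ℤ) - 1) * q2 = 0 := by
        have : q2 = v.2 - u.2 := by omega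
        rw [this] at hq2 ⊢
        linear_combination -hq2
      have hqne : q1 ≠ 0 ∨ q2 ≠ 0 := by
        by_contra h
        push_neg at h
        apply huv
        rw [h.1, mul_zero] at hq1
        rw [h.2, mul_zero] at hq2
        exact Prod.ext (by omega) (by omega)
      rcases hqne with h | h
      · have := mul_eq_zero.1 hq1'
        rcases this with h' | h'
        · omega
        · exact absurd h' h
      · have := mul_eq_zero.1 hq2'
        rcases this with h' | h'
        · omega
        · exact absurd h' h
  -- Bezout coefficients
  have hcop : IsCoprime (v.1 - u.1) (v.2 - u.2) := Int.isCoprime_iff_gcd_eq_one.2 (by rw [← hgdef]; exact_mod_cast hg1)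
  obtain ⟨A, B, hAB⟩ := hcop
  have hABr : (A : ℝ) * ((v.1 : ℝ) - u.1) + (B : ℝ) * ((v.2 : ℝ) - u.2) = 1 := by
    exact_mod_cast hAB
  -- tau
  obtain ⟨tau, htau⟩ : ∃ t : ℝ, t = (d : ℝ) * lam (zr v) := ⟨_, rfl⟩
  have e1 : (x.1 : ℝ) - (d : ℝ) * u.1 = tau * ((v.1 : ℝ) - u.1) := by
    rw [htau]
    linear_combination -hx1 - (d : ℝ) * hy1 + (d : ℝ) * (u.1 : ℝ) * hl1
  have e2 : (x.2 : ℝ) - (d : ℝ) * u.2 = tau * ((v.2 : ℝ) - u.2) := by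
    rw [htau]
    linear_combination -hx2 - (d : ℝ) * hy2 + (d : ℝ) * (u.2 : ℝ) * hl1
  obtain ⟨k, hk⟩ : ∃ k : ℤ, k = A * (x.1 - d * u.1) + B * (x.2 - d * u.2) := ⟨_, rfl⟩
  have hkr : (k : ℝ) = tau := by
    rw [hk]
    push_cast
    linear_combination (A : ℝ) * e1 + (B : ℝ) * e2 + tau * hABr
  have htau0 : 0 ≤ tau := by
    rw [htau]
    positivity
  have htaud : tau ≤ (d : ℝ) := by
    rw [htau]
    have : lam (zr v) ≤ 1 := by linarith
    nlinarith [Nat.cast_nonneg (α := ℝ) d]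
  have hk0 : 0 ≤ k := by
    have : (0 : ℝ) ≤ (k : ℝ) := by rw [hkr]; exact htau0
    exact_mod_cast this
  have hkd : k ≤ (d : ℤ) := by
    have : (k : ℝ) ≤ (d : ℝ) := by rw [hkr]; exact htaud
    exact_mod_cast this
  obtain ⟨n, hn⟩ : ∃ n : ℕ, (n : ℤ) = k := ⟨k.toNat, Int.toNat_of_nonneg hk0⟩
  have hnd : n ≤ d := by
    have : (n : ℤ) ≤ (d : ℤ) := by rw [hn]; exact hkd
    exact_mod_cast this
  have hix1 : x.1 = d * u.1 + k * (v.1 - u.1) := by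
    have : (x.1 : ℝ) = (d : ℝ) * u.1 + (k : ℝ) * ((v.1 : ℝ) - u.1) := by
      rw [hkr]
      linear_combination e1
    exact_mod_cast this
  have hix2 : x.2 = d * u.2 + k * (v.2 - u.2) := by
    have : (x.2 : ℝ) = (d : ℝ) * u.2 + (k : ℝ) * ((v.2 : ℝ) - u.2) := by
      rw [hkr]
      linear_combination e2
    exact_mod_cast this
  refine ⟨Multiset.replicate (d - n) u + Multiset.replicate n v, ?_, ?_, ?_⟩
  · rw [Multiset.card_add, Multiset.card_replicate, Multiset.card_replicate]
    omega
  · intro p hp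
    rw [Multiset.mem_add] at hp
    rcases hp with hp | hp
    · rw [Multiset.eq_of_mem_replicate hp]
      exact mem_hull_of_mem (by simp)
    · rw [Multiset.eq_of_mem_replicate hp]
      exact mem_hull_of_mem (by simp)
  · rw [Multiset.sum_add, Multiset.sum_replicate, Multiset.sum_replicate]
    apply Prod.ext
    · simp only [Prod.fst_add, Prod.smul_fst]
      simp only [nsmul_eq_mul]
      push_cast [Nat.cast_sub hnd]
      linear_combination -hix1 + ((v.1 : ℤ) - u.1) * hn
    · simp only [Prod.snd_add, Prod.smul_snd]
      simp only [nsmul_eq_mul]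
      push_cast [Nat.cast_sub hnd]
      linear_combination -hix2 + ((v.2 : ℤ) - u.2) * hn

end

noncomputable section

lemma triangle_case {v1 v2 v3 : ℤ × ℤ}
    (hbase : ∀ p : ℤ × ℤ, zr p ∈ hull {v1, v2, v3} → p ∈ ({v1, v2, v3} : Finset (ℤ × ℤ)))
    (hD : (v2.1 - v1.1) * (v3.2 - v1.2) - (v2.2 - v1.2) * (v3.1 - v1.1) ≠ 0)
    (d : ℕ) (x : ℤ × ℤ) {y : ℝ × ℝ}
    (hy : y ∈ hull {v1, v2, v3}) (hdy : (d : ℝ) • y = zr x) :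
    ∃ l : Multiset (ℤ × ℤ), Multiset.card l = d ∧ (∀ p ∈ l, zr p ∈ hull {v1, v2, v3}) ∧
      l.sum = x := by
  have h12 : v1 ≠ v2 := by rintro rfl; apply hD; ring
  have h13 : v1 ≠ v3 := by rintro rfl; apply hD; ring
  have h23 : v2 ≠ v3 := by rintro rfl; apply hD; ring
  have e12 : zr v1 ≠ zr v2 := fun h => h12 (zr_injective h)
  have e13 : zr v1 ≠ zr v3 := fun h => h13 (zr_injective h)
  have e23 : zr v2 ≠ zr v3 := fun h => h23 (zr_injective h)
  obtain ⟨D, hDdef⟩ : ∃ D : ℤ,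
      D = (v2.1 - v1.1) * (v3.2 - v1.2) - (v2.2 - v1.2) * (v3.1 - v1.1) := ⟨_, rfl⟩
  have hD1 : D = 1 ∨ D = -1 := by rw [hDdef]; exact unimodular hbase hD
  have hDD : (D : ℝ) * (D : ℝ) = 1 := by
    rcases hD1 with h | h <;> rw [h] <;> norm_num
  rw [hull, image_triple] at hy
  obtain ⟨lam, hl0, hl1, hls⟩ := weights_of_mem_convexHull hy
  rw [Finset.sum_insert (by simp [e12, e13]), Finset.sum_insert (by simp [e23]),
    Finset.sum_singleton] at hl1 hls
  have hlv1 : 0 ≤ lam (zr v1) := hl0 _ (by simp)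
  have hlv2 : 0 ≤ lam (zr v2) := hl0 _ (by simp)
  have hlv3 : 0 ≤ lam (zr v3) := hl0 _ (by simp)
  have hzr1 : ∀ p : ℤ × ℤ, (zr p).1 = (p.1 : ℝ) := fun p => rfl
  have hzr2 : ∀ p : ℤ × ℤ, (zr p).2 = (p.2 : ℝ) := fun p => rfl
  have hy1 : lam (zr v1) * v1.1 + lam (zr v2) * v2.1 + lam (zr v3) * v3.1 = y.1 := by
    have := congrArg Prod.fst hls
    simp only [Prod.fst_add, Prod.smul_fst, smul_eq_mul, hzr1] at this
    linear_combination this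
  have hy2 : lam (zr v1) * v1.2 + lam (zr v2) * v2.2 + lam (zr v3) * v3.2 = y.2 := by
    have := congrArg Prod.snd hls
    simp only [Prod.snd_add, Prod.smul_snd, smul_eq_mul, hzr2] at this
    linear_combination this
  have hx1 : (d : ℝ) * y.1 = x.1 := congrArg Prod.fst hdy
  have hx2 : (d : ℝ) * y.2 = x.2 := congrArg Prod.snd hdy
  have e1 : (x.1 : ℝ) - (d : ℝ) * v1.1 =
      ((d : ℝ) * lam (zr v2)) * ((v2.1 : ℝ) - v1.1)
      + ((d : ℝ) * lam (zr v3)) * ((v3.1 : ℝ) - v1.1) := by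
    linear_combination -hx1 - (d : ℝ) * hy1 + (d : ℝ) * (v1.1 : ℝ) * hl1
  have e2 : (x.2 : ℝ) - (d : ℝ) * v1.2 =
      ((d : ℝ) * lam (zr v2)) * ((v2.2 : ℝ) - v1.2)
      + ((d : ℝ) * lam (zr v3)) * ((v3.2 : ℝ) - v1.2) := by
    linear_combination -hx2 - (d : ℝ) * hy2 + (d : ℝ) * (v1.2 : ℝ) * hl1
  obtain ⟨c2, hc2def⟩ : ∃ c : ℤ, c = (x.1 - d * v1.1) * (v3.2 - v1.2)
      - (x.2 - d * v1.2) * (v3.1 - v1.1) := ⟨_, rfl⟩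
  obtain ⟨c3, hc3def⟩ : ∃ c : ℤ, c = (v2.1 - v1.1) * (x.2 - d * v1.2)
      - (v2.2 - v1.2) * (x.1 - d * v1.1) := ⟨_, rfl⟩
  have hc2 : ((d : ℝ) * lam (zr v2)) * (D : ℝ) = (c2 : ℝ) := by
    rw [hc2def, hDdef]
    push_cast
    linear_combination (-((v3.2 : ℝ) - v1.2)) * e1 + (((v3.1 : ℝ) - v1.1)) * e2
  have hc3 : ((d : ℝ) * lam (zr v3)) * (D : ℝ) = (c3 : ℝ) := by
    rw [hc3def, hDdef]
    push_cast
    linear_combination (((v2.2 : ℝ) - v1.2)) * e1 - (((v2.1 : ℝ) - v1.1)) * e2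
  obtain ⟨k2, hk2def⟩ : ∃ k : ℤ, k = c2 * D := ⟨_, rfl⟩
  obtain ⟨k3, hk3def⟩ : ∃ k : ℤ, k = c3 * D := ⟨_, rfl⟩
  have hk2r : (k2 : ℝ) = (d : ℝ) * lam (zr v2) := by
    rw [hk2def]
    push_cast
    linear_combination (-(D : ℝ)) * hc2 + ((d : ℝ) * lam (zr v2)) * hDD
  have hk3r : (k3 : ℝ) = (d : ℝ) * lam (zr v3) := by
    rw [hk3def]
    push_cast
    linear_combination (-(D : ℝ)) * hc3 + ((d : ℝ) * lam (zr v3)) * hDD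
  have hk20 : 0 ≤ k2 := by
    have : (0 : ℝ) ≤ (k2 : ℝ) := by
      rw [hk2r]; positivity
    exact_mod_cast this
  have hk30 : 0 ≤ k3 := by
    have : (0 : ℝ) ≤ (k3 : ℝ) := by
      rw [hk3r]; positivity
    exact_mod_cast this
  have hkle : k2 + k3 ≤ (d : ℤ) := by
    have : (k2 : ℝ) + (k3 : ℝ) ≤ (d : ℝ) := by
      rw [hk2r, hk3r]
      nlinarith [show (0:ℝ) ≤ (d:ℝ) from Nat.cast_nonneg d]
    exact_mod_cast this
  have hix1 : x.1 = d * v1.1 + k2 * (v2.1 - v1.1) + k3 * (v3.1 - v1.1) := by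
    have : (x.1 : ℝ) = (d : ℝ) * v1.1 + (k2 : ℝ) * ((v2.1 : ℝ) - v1.1)
        + (k3 : ℝ) * ((v3.1 : ℝ) - v1.1) := by
      rw [hk2r, hk3r]
      linear_combination e1
    exact_mod_cast this
  have hix2 : x.2 = d * v1.2 + k2 * (v2.2 - v1.2) + k3 * (v3.2 - v1.2) := by
    have : (x.2 : ℝ) = (d : ℝ) * v1.2 + (k2 : ℝ) * ((v2.2 : ℝ) - v1.2)
        + (k3 : ℝ) * ((v3.2 : ℝ) - v1.2) := by
      rw [hk2r, hk3r]
      linear_combination e2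
    exact_mod_cast this
  obtain ⟨n2, hn2⟩ : ∃ n : ℕ, (n : ℤ) = k2 := ⟨k2.toNat, Int.toNat_of_nonneg hk20⟩
  obtain ⟨n3, hn3⟩ : ∃ n : ℕ, (n : ℤ) = k3 := ⟨k3.toNat, Int.toNat_of_nonneg hk30⟩
  have hsub : ((d - n2 - n3 : ℕ) : ℤ) = (d : ℤ) - k2 - k3 := by omega
  refine ⟨Multiset.replicate (d - n2 - n3) v1 + Multiset.replicate n2 v2
    + Multiset.replicate n3 v3, ?_, ?_, ?_⟩
  · rw [Multiset.card_add, Multiset.card_add, Multiset.card_replicate,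
      Multiset.card_replicate, Multiset.card_replicate]
    omega
  · intro p hp
    rw [Multiset.mem_add] at hp
    rcases hp with hp | hp
    · rw [Multiset.mem_add] at hp
      rcases hp with hp | hp
      · rw [Multiset.eq_of_mem_replicate hp]
        exact mem_hull_of_mem (by simp)
      · rw [Multiset.eq_of_mem_replicate hp]
        exact mem_hull_of_mem (by simp)
    · rw [Multiset.eq_of_mem_replicate hp]
      exact mem_hull_of_mem (by simp)
  · rw [Multiset.sum_add, Multiset.sum_add, Multiset.sum_replicate, Multiset.sum_replicate,
      Multiset.sum_replicate]
    apply Prod.ext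
    · simp only [Prod.fst_add, Prod.smul_fst]
      simp only [nsmul_eq_mul]
      rw [hsub, hn2, hn3]
      linear_combination -hix1
    · simp only [Prod.snd_add, Prod.smul_snd]
      simp only [nsmul_eq_mul]
      rw [hsub, hn2, hn3]
      linear_combination -hix2

end

noncomputable section

lemma key : ∀ (N : ℕ) (V : Finset (ℤ × ℤ)),
    (latt (hull V)).Finite → (latt (hull V)).ncard + V.card ≤ N →
    ∀ (d : ℕ) (x : ℤ × ℤ) (y : ℝ × ℝ), y ∈ hull V → (d : ℝ) • y = zr x →
    ∃ l : Multiset (ℤ × ℤ), Multiset.card l = d ∧ (∀ p ∈ l, zr p ∈ hull V) ∧ l.sum = x := by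
  intro N
  induction N using Nat.strong_induction_on with
  | _ N IH =>
  intro V hfin hle d x y hy hdy
  classical
  have hVne : V.Nonempty := by
    rcases Finset.eq_empty_or_nonempty V with rfl | h
    · exfalso
      rw [hull] at hy
      simp [convexHull_empty] at hy
    · exact h
  have hVpos : 1 ≤ V.card := Finset.card_pos.2 hVne
  by_cases hred : ∃ v ∈ V, zr v ∈ hull (V.erase v)
  · -- a redundant generator
    obtain ⟨v, hvV, hvh⟩ := hred
    have hhe : hull (V.erase v) = hull V := by
      apply Set.Subset.antisymm (hull_mono (Finset.erase_subset _ _))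
      rw [hull]
      apply convexHull_min _ (convex_convexHull _ _)
      intro q hq
      rw [Finset.coe_image] at hq
      obtain ⟨u, huV, rfl⟩ := hq
      by_cases hu : u = v
      · exact hu ▸ hvh
      · exact mem_hull_of_mem (Finset.mem_erase.2 ⟨hu, huV⟩)
    have hcard : (V.erase v).card < V.card := Finset.card_erase_lt_of_mem hvV
    obtain ⟨l, h1, h2, h3⟩ := IH (N - 1) (by omega) (V.erase v) (by rw [hhe]; exact hfin)
      (by rw [hhe]; omega) d x y (by rw [hhe]; exact hy) hdy
    exact ⟨l, h1, fun p hp => hhe ▸ h2 p hp, h3⟩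
  push_neg at hred
  by_cases hw : ∃ w, w ∈ latt (hull V) ∧ w ∉ V
  · -- an extra lattice point: stellar subdivision
    obtain ⟨w, hwL, hwV⟩ := hw
    have hwhull : zr w ∈ hull V := hwL
    have hwnotim : zr w ∉ V.image zr := by
      intro h
      obtain ⟨u, hu, he⟩ := Finset.mem_image.1 h
      exact hwV ((zr_injective he) ▸ hu)
    obtain ⟨q, hqim, hq⟩ := stellar (V.image zr) (zr w) hwnotim hwhull hy
    obtain ⟨v, hvV, rfl⟩ := Finset.mem_image.1 hqim
    have him : ((V.image zr).erase (zr v)) = (V.erase v).image zr :=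
      (Finset.image_erase zr_injective V v).symm
    have hins : insert (zr w) ((V.image zr).erase (zr v)) = (insert w (V.erase v)).image zr := by
      rw [him, Finset.image_insert]
    rw [hins] at hq
    have hq' : y ∈ hull (insert w (V.erase v)) := hq
    have hsub : hull (insert w (V.erase v)) ⊆ hull V := by
      rw [hull]
      apply convexHull_min _ (convex_convexHull _ _)
      intro q hqq
      rw [Finset.coe_image] at hqq
      obtain ⟨u, huW, rfl⟩ := hqq
      rcases Finset.mem_insert.1 huW with rfl | hu
      · exact hwhull
      · exact mem_hull_of_mem (Finset.mem_of_mem_erase hu)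
    have hvni : zr v ∉ hull (insert w (V.erase v)) := by
      have h1 : zr v ∉ convexHull ℝ (((V.image zr).erase (zr v) : Finset (ℝ × ℝ)) : Set (ℝ × ℝ)) := by
        rw [him]
        exact hred v hvV
      have h2 := vertex_not_mem (V.image zr) (zr v) (zr w)
        (Finset.mem_image_of_mem zr hvV) hwnotim h1 hwhull
      rw [hins] at h2
      exact h2
    have hlattsub : latt (hull (insert w (V.erase v))) ⊆ latt (hull V) :=
      fun p hp => hsub hp
    have hlss : latt (hull (insert w (V.erase v))) ⊂ latt (hull V) :=
      (Set.ssubset_iff_of_subset hlattsub).2 ⟨v, mem_hull_of_mem hvV, hvni⟩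
    have hfin' : (latt (hull (insert w (V.erase v)))).Finite := hfin.subset hlattsub
    have hncard : (latt (hull (insert w (V.erase v)))).ncard < (latt (hull V)).ncard :=
      Set.ncard_lt_ncard hlss hfin
    have hc1 : (insert w (V.erase v)).card = (V.erase v).card + 1 :=
      Finset.card_insert_of_notMem (fun h => hwV (Finset.mem_of_mem_erase h))
    have hc2 : (V.erase v).card = V.card - 1 := Finset.card_erase_of_mem hvV
    obtain ⟨l, h1, h2, h3⟩ := IH (N - 1) (by omega) (insert w (V.erase v)) hfin'
      (by omega) d x y hq' hdy
    exact ⟨l, h1, fun p hp => hsub (h2 p hp), h3⟩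
  push_neg at hw
  have hbase : ∀ p : ℤ × ℤ, zr p ∈ hull V → p ∈ V := fun p hp => hw p hp
  -- Caratheodory
  have hy' := hy
  rw [hull, convexHull_eq_union] at hy'
  simp only [Set.mem_iUnion] at hy'
  obtain ⟨t, hts, hai, hyt⟩ := hy'
  set V' : Finset (ℤ × ℤ) := V.filter (fun p => zr p ∈ t) with hV'def
  have him' : V'.image zr = t := by
    apply Finset.ext
    intro q
    constructor
    · intro hq
      obtain ⟨p, hp, rfl⟩ := Finset.mem_image.1 hq
      exact (Finset.mem_filter.1 hp).2
    · intro hq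
      have : q ∈ (V.image zr : Set (ℝ × ℝ)) := hts hq
      rw [Finset.coe_image] at this
      obtain ⟨p, hpV, rfl⟩ := this
      exact Finset.mem_image_of_mem zr (Finset.mem_filter.2 ⟨hpV, hq⟩)
  have hyV' : y ∈ hull V' := by rw [hull, him']; exact hyt
  have hsubV' : hull V' ⊆ hull V := hull_mono (Finset.filter_subset _ _)
  by_cases hV'eq : V' = V
  · -- V itself is affinely independent with at most 3 elements
    rw [hV'eq] at him' hyV'
    rw [← him'] at hai
    have hcard3 : V.card ≤ 3 := by
      have h1 := hai.card_le_finrank_succ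
      rw [Fintype.card_coe, Finset.card_image_of_injective _ zr_injective] at h1
      have h2 : Module.finrank ℝ (vectorSpan ℝ (Set.range ((↑) : ↑(V.image zr) → ℝ × ℝ)))
          ≤ Module.finrank ℝ (ℝ × ℝ) := Submodule.finrank_le _
      have h3 : Module.finrank ℝ (ℝ × ℝ) = 2 := by
        rw [Module.finrank_prod, Module.finrank_self]
      omega
    have : V.card = 1 ∨ V.card = 2 ∨ V.card = 3 := by omega
    rcases this with hc | hc | hc
    · obtain ⟨v, rfl⟩ := Finset.card_eq_one.1 hc
      exact singleton_case v d x hyV' hdy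
    · obtain ⟨u, v, huv, rfl⟩ := Finset.card_eq_two.1 hc
      exact segment_case huv hbase d x hyV' hdy
    · obtain ⟨v1, v2, v3, h12, h13, h23, rfl⟩ := Finset.card_eq_three.1 hc
      -- derive the determinant is nonzero from affine independence
      have e12 : zr v1 ≠ zr v2 := fun h => h12 (zr_injective h)
      have e13 : zr v1 ≠ zr v3 := fun h => h13 (zr_injective h)
      have e23 : zr v2 ≠ zr v3 := fun h => h23 (zr_injective h)
      rw [image_triple] at hai
      have hD : (v2.1 - v1.1) * (v3.2 - v1.2) - (v2.2 - v1.2) * (v3.1 - v1.1) ≠ 0 := by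
        intro hD0
        have hDr : ((v2.1 : ℝ) - v1.1) * ((v3.2 : ℝ) - v1.2)
            - ((v2.2 : ℝ) - v1.2) * ((v3.1 : ℝ) - v1.1) = 0 := by
          have : (((v2.1 - v1.1) * (v3.2 - v1.2) - (v2.2 - v1.2) * (v3.1 - v1.1) : ℤ) : ℝ) = 0 := by
            rw [hD0]; norm_num
          push_cast at this
          linear_combination this
        have hane : v2.1 - v1.1 ≠ 0 ∨ v2.2 - v1.2 ≠ 0 := by
          by_contra h
          push_neg at h
          apply h12
          have := h.1
          have := h.2
          exact Prod.ext (by omega) (by omega)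
        rcases hane with ha | ha
        · -- use (μ, ν) = (v3.1 - v1.1, -(v2.1 - v1.1))
          have hcomb : ((v3.1 : ℝ) - v1.1) • (zr v2 - zr v1)
              + (-((v2.1 : ℝ) - v1.1)) • (zr v3 - zr v1) = 0 := by
            apply Prod.ext
            · simp only [Prod.fst_add, Prod.fst_sub, Prod.smul_fst, smul_eq_mul, Prod.fst_zero, zr]
              ring
            · simp only [Prod.snd_add, Prod.snd_sub, Prod.smul_snd, smul_eq_mul, Prod.snd_zero, zr]
              linear_combination -hDr
          obtain ⟨-, hnu⟩ := indep_vec e12 e13 e23 hai hcomb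
          apply ha
          have : ((v2.1 : ℝ) - v1.1) = 0 := by linarith [hnu]
          have : ((v2.1 - v1.1 : ℤ) : ℝ) = 0 := by push_cast; linear_combination this
          exact_mod_cast this
        · -- use (μ, ν) = (v3.2 - v1.2, -(v2.2 - v1.2))
          have hcomb : ((v3.2 : ℝ) - v1.2) • (zr v2 - zr v1)
              + (-((v2.2 : ℝ) - v1.2)) • (zr v3 - zr v1) = 0 := by
            apply Prod.ext
            · simp only [Prod.fst_add, Prod.fst_sub, Prod.smul_fst, smul_eq_mul, Prod.fst_zero, zr]
              linear_combination hDr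
            · simp only [Prod.snd_add, Prod.snd_sub, Prod.smul_snd, smul_eq_mul, Prod.snd_zero, zr]
              ring
          obtain ⟨-, hnu⟩ := indep_vec e12 e13 e23 hai hcomb
          apply ha
          have : ((v2.2 : ℝ) - v1.2) = 0 := by linarith [hnu]
          have : ((v2.2 - v1.2 : ℤ) : ℝ) = 0 := by push_cast; linear_combination this
          exact_mod_cast this
      exact triangle_case hbase hD d x hyV' hdy
  · -- recurse on the smaller vertex set V'
    have hss : V' ⊂ V := lt_of_le_of_ne (Finset.filter_subset _ _) hV'eq
    have hcardlt : V'.card < V.card := Finset.card_lt_card hss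
    have hlattle : (latt (hull V')).ncard ≤ (latt (hull V)).ncard :=
      Set.ncard_le_ncard (fun p hp => hsubV' hp) hfin
    obtain ⟨l, h1, h2, h3⟩ := IH (N - 1) (by omega) V' (hfin.subset (fun p hp => hsubV' hp))
      (by omega) d x y hyV' hdy
    exact ⟨l, h1, fun p hp => hsubV' (h2 p hp), h3⟩

end

noncomputable section

lemma sum_count_univ {n : ℕ} (l : Multiset (Fin n)) : ∑ k, l.count k = Multiset.card l := by
  classical
  rw [← Multiset.toFinset_sum_count_eq l]
  exact (Finset.sum_subset (Finset.subset_univ _) (fun k _ hk =>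
    Multiset.count_eq_zero.2 (fun h => hk (Multiset.mem_toFinset.2 h)))).symm

lemma sum_count_smul {n : ℕ} {M : Type*} [AddCommMonoid M] (l : Multiset (Fin n)) (F : Fin n → M) :
    ∑ k, l.count k • F k = (l.map F).sum := by
  classical
  induction l using Multiset.induction_on with
  | empty => simp
  | cons a s ih =>
    simp only [Multiset.count_cons, Multiset.map_cons, Multiset.sum_cons, add_smul,
      Finset.sum_add_distrib, ih, ite_smul, one_smul, zero_smul, Finset.sum_ite_eq']
    simp [add_comm]

lemma multiset_sum_fst (l : Multiset (ℤ × ℤ)) : (l.map Prod.fst).sum = l.sum.1 := by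
  induction l using Multiset.induction_on with
  | empty => simp
  | cons a s ih => simp [ih]

lemma multiset_sum_snd (l : Multiset (ℤ × ℤ)) : (l.map Prod.snd).sum = l.sum.2 := by
  induction l using Multiset.induction_on with
  | empty => simp
  | cons a s ih => simp [ih]

lemma mono_eq {K : Type*} [Field K] (r : K) (α : Fin 2 →₀ ℕ) :
    (MvPolynomial.monomial α r : MvPolynomial (Fin 2) K)
      = MvPolynomial.C r * (MvPolynomial.X 0 ^ (α 0) * MvPolynomial.X 1 ^ (α 1)) := by
  have hidx : Finsupp.single (0 : Fin 2) (α 0) + Finsupp.single 1 (α 1) = α := by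
    ext i
    fin_cases i <;> simp [Finsupp.single_apply]
  rw [MvPolynomial.X_pow_eq_monomial, MvPolynomial.X_pow_eq_monomial,
    MvPolynomial.monomial_mul, MvPolynomial.C_apply, MvPolynomial.monomial_mul,
    zero_add, hidx, one_mul, mul_one]

end

end ToricAux

open ToricAux

/-- **Factorization through the toric embedding.** Let `K` be a field, `S ⊆ ℕ²` a nonempty
finite set with convex hull `P`, `d ≥ 1`, and let `(a₀,b₀), …, (a_m,b_m)` enumerate the
lattice points of `P`. If `f ∈ K[s,t]` has support contained in `d • P`, then there is a
homogeneous polynomial `g ∈ K[X₀,…,X_m]` of degree `d` with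
`f(s,t) = g(s^{a₀} t^{b₀}, …, s^{a_m} t^{b_m})`. -/
theorem parametrization_factors_through_toric_embedding (K : Type*) [Field K]
    (S : Finset (ℕ × ℕ)) (hS : S.Nonempty)
    (P : Set (ℝ × ℝ))
    (hP : P = convexHull ℝ ((fun z : ℕ × ℕ => ((z.1 : ℝ), (z.2 : ℝ))) '' (S : Set (ℕ × ℕ))))
    (d : ℕ) (hd : 1 ≤ d)
    (m : ℕ) (e : Fin (m + 1) → ℕ × ℕ)
    (he : {z : ℕ × ℕ | ((z.1 : ℝ), (z.2 : ℝ)) ∈ P} = Set.range e)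
    (f : MvPolynomial (Fin 2) K)
    (hf : ∀ α ∈ f.support, (((α 0 : ℕ) : ℝ), ((α 1 : ℕ) : ℝ)) ∈ (d : ℝ) • P) :
    ∃ g : MvPolynomial (Fin (m + 1)) K, g.IsHomogeneous d ∧
      f = aeval (fun k : Fin (m + 1) => (X 0 : MvPolynomial (Fin 2) K) ^ (e k).1 * X 1 ^ (e k).2) g := by
  classical
  obtain ⟨Vz, hVz⟩ : ∃ W : Finset (ℤ × ℤ), W = S.image (fun z => ((z.1 : ℤ), (z.2 : ℤ))) :=
    ⟨_, rfl⟩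
  have hfun : zr ∘ (fun z : ℕ × ℕ => ((z.1 : ℤ), (z.2 : ℤ)))
      = fun z : ℕ × ℕ => ((z.1 : ℝ), (z.2 : ℝ)) := by
    funext z
    apply Prod.ext <;> simp [zr]
  have hPhull : P = hull Vz := by
    rw [hP, hull, hVz, Finset.image_image, hfun, Finset.coe_image]
  have hQ : ∀ q ∈ P, 0 ≤ q.1 ∧ 0 ≤ q.2 := by
    intro q hq
    rw [hP] at hq
    have hconv : Convex ℝ {q : ℝ × ℝ | 0 ≤ q.1 ∧ 0 ≤ q.2} := by
      intro p hp r hr a b ha hb hab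
      constructor
      · have h1 : (a • p + b • r).1 = a * p.1 + b * r.1 := by
          simp [Prod.smul_fst]
        rw [h1]
        have := mul_nonneg ha hp.1
        have := mul_nonneg hb hr.1
        linarith
      · have h1 : (a • p + b • r).2 = a * p.2 + b * r.2 := by
          simp [Prod.smul_snd]
        rw [h1]
        have := mul_nonneg ha hp.2
        have := mul_nonneg hb hr.2
        linarith
    have hsub : convexHull ℝ ((fun z : ℕ × ℕ => ((z.1 : ℝ), (z.2 : ℝ))) '' (S : Set (ℕ × ℕ)))
        ⊆ {q : ℝ × ℝ | 0 ≤ q.1 ∧ 0 ≤ q.2} := by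
      apply convexHull_min _ hconv
      rintro q ⟨z, _, rfl⟩
      exact ⟨Nat.cast_nonneg _, Nat.cast_nonneg _⟩
    exact hsub hq
  have hlatt_mem : ∀ p : ℤ × ℤ, zr p ∈ P →
      ∃ k : Fin (m + 1), ((e k).1 : ℤ) = p.1 ∧ ((e k).2 : ℤ) = p.2 := by
    intro p hp
    obtain ⟨h1, h2⟩ := hQ _ hp
    have h1' : (0 : ℝ) ≤ (p.1 : ℝ) := h1
    have h2' : (0 : ℝ) ≤ (p.2 : ℝ) := h2
    have hp1 : 0 ≤ p.1 := by exact_mod_cast h1'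
    have hp2 : 0 ≤ p.2 := by exact_mod_cast h2'
    have hz : ((p.1.toNat, p.2.toNat) : ℕ × ℕ) ∈ {z : ℕ × ℕ | ((z.1 : ℝ), (z.2 : ℝ)) ∈ P} := by
      show (((p.1.toNat : ℕ) : ℝ), ((p.2.toNat : ℕ) : ℝ)) ∈ P
      have e1 : ((p.1.toNat : ℕ) : ℝ) = (p.1 : ℝ) := by
        rw [← Int.cast_natCast, Int.toNat_of_nonneg hp1]
      have e2 : ((p.2.toNat : ℕ) : ℝ) = (p.2 : ℝ) := by
        rw [← Int.cast_natCast, Int.toNat_of_nonneg hp2]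
      rw [e1, e2]
      exact hp
    rw [he] at hz
    obtain ⟨k, hk⟩ := hz
    refine ⟨k, ?_, ?_⟩
    · rw [hk]
      simp [Int.toNat_of_nonneg hp1]
    · rw [hk]
      simp [Int.toNat_of_nonneg hp2]
  have hfin : (latt P).Finite := by
    apply Set.Finite.subset (Set.finite_range (fun k : Fin (m + 1) =>
      (((e k).1 : ℤ), ((e k).2 : ℤ))))
    intro p hp
    obtain ⟨k, hk1, hk2⟩ := hlatt_mem p hp
    exact ⟨k, Prod.ext hk1 hk2⟩
  obtain ⟨pick, hpick⟩ : ∃ pick : ℤ × ℤ → Fin (m + 1), ∀ p : ℤ × ℤ, zr p ∈ P →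
      ((e (pick p)).1 : ℤ) = p.1 ∧ ((e (pick p)).2 : ℤ) = p.2 := by
    refine ⟨fun p => if h : ∃ k : Fin (m + 1), ((e k).1 : ℤ) = p.1 ∧ ((e k).2 : ℤ) = p.2
      then h.choose else 0, ?_⟩
    intro p hp
    have h := hlatt_mem p hp
    simp only [dif_pos h]
    exact h.choose_spec
  have hmain : ∀ α : Fin 2 →₀ ℕ, α ∈ f.support → ∃ c : Fin (m + 1) →₀ ℕ,
      (∑ k, c k) = d ∧ (∑ k, c k * (e k).1) = α 0 ∧ (∑ k, c k * (e k).2) = α 1 := by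
    intro α hα
    obtain ⟨y, hyP, hdy⟩ := Set.mem_smul_set.1 (hf α hα)
    obtain ⟨x, hx⟩ : ∃ x : ℤ × ℤ, x = (((α 0 : ℕ) : ℤ), ((α 1 : ℕ) : ℤ)) := ⟨_, rfl⟩
    have hdy' : (d : ℝ) • y = zr x := by
      rw [hdy, hx]
      apply Prod.ext <;> simp [zr]
    obtain ⟨l, hlc, hlm, hls⟩ := key ((latt (hull Vz)).ncard + Vz.card) Vz
      (by rw [← hPhull]; exact hfin) le_rfl d x y (by rw [← hPhull]; exact hyP) hdy'
    have hlmP : ∀ p ∈ l, zr p ∈ P := fun p hp => by rw [hPhull]; exact hlm p hp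
    refine ⟨Finsupp.equivFunOnFinite.symm (fun k => (l.map pick).count k), ?_, ?_, ?_⟩
    · have : ∀ k, (Finsupp.equivFunOnFinite.symm (fun k => (l.map pick).count k)) k
          = (l.map pick).count k := fun k => rfl
      simp only [this]
      rw [sum_count_univ, Multiset.card_map, hlc]
    · have hc : ∀ k, (Finsupp.equivFunOnFinite.symm (fun k => (l.map pick).count k)) k
          = (l.map pick).count k := fun k => rfl
      have hcast : ((∑ k, (l.map pick).count k * (e k).1 : ℕ) : ℤ) = ((α 0 : ℕ) : ℤ) := by
        push_cast
        have h1 : ∀ k, ((l.map pick).count k : ℤ) * ((e k).1 : ℤ)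
            = (l.map pick).count k • ((e k).1 : ℤ) := by
          intro k
          rw [nsmul_eq_mul]
        rw [Finset.sum_congr rfl (fun k _ => h1 k), sum_count_smul, Multiset.map_map]
        have h2 : l.map ((fun k => ((e k).1 : ℤ)) ∘ pick) = l.map Prod.fst := by
          apply Multiset.map_congr rfl
          intro p hp
          exact (hpick p (hlmP p hp)).1
        rw [h2]
        rw [multiset_sum_fst, hls, hx]
      simp only [hc]
      exact_mod_cast hcast
    · have hc : ∀ k, (Finsupp.equivFunOnFinite.symm (fun k => (l.map pick).count k)) k
          = (l.map pick).count k := fun k => rfl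
      have hcast : ((∑ k, (l.map pick).count k * (e k).2 : ℕ) : ℤ) = ((α 1 : ℕ) : ℤ) := by
        push_cast
        have h1 : ∀ k, ((l.map pick).count k : ℤ) * ((e k).2 : ℤ)
            = (l.map pick).count k • ((e k).2 : ℤ) := by
          intro k
          rw [nsmul_eq_mul]
        rw [Finset.sum_congr rfl (fun k _ => h1 k), sum_count_smul, Multiset.map_map]
        have h2 : l.map ((fun k => ((e k).2 : ℤ)) ∘ pick) = l.map Prod.snd := by
          apply Multiset.map_congr rfl
          intro p hp
          exact (hpick p (hlmP p hp)).2
        rw [h2]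
        rw [multiset_sum_snd, hls, hx]
      simp only [hc]
      exact_mod_cast hcast
  -- choose exponent functions
  obtain ⟨cf, hcf⟩ : ∃ cf : (Fin 2 →₀ ℕ) → (Fin (m + 1) →₀ ℕ), ∀ α ∈ f.support,
      (∑ k, cf α k) = d ∧ (∑ k, cf α k * (e k).1) = α 0 ∧ (∑ k, cf α k * (e k).2) = α 1 := by
    refine ⟨fun α => if h : α ∈ f.support then (hmain α h).choose else 0, ?_⟩
    intro α hα
    simp only [dif_pos hα]
    exact (hmain α hα).choose_spec
  refine ⟨∑ α ∈ f.support, monomial (cf α) (f.coeff α), ?_, ?_⟩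
  · apply MvPolynomial.IsHomogeneous.sum
    intro α hα
    apply isHomogeneous_monomial
    rw [Finsupp.degree_apply]
    rw [Finset.sum_subset (Finset.subset_univ _)
      (fun k _ hk => Finsupp.notMem_support_iff.1 hk)]
    exact (hcf α hα).1
  · rw [map_sum]
    conv_lhs => rw [← support_sum_monomial_coeff f]
    apply Finset.sum_congr rfl
    intro α hα
    rw [aeval_monomial]
    rw [Finsupp.prod_fintype _ _ (fun k => pow_zero _)]
    have hprod : (∏ k, ((X 0 : MvPolynomial (Fin 2) K) ^ (e k).1 * X 1 ^ (e k).2) ^ (cf α k))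
        = X 0 ^ (α 0) * X 1 ^ (α 1) := by
      have h1 : ∀ k, ((X 0 : MvPolynomial (Fin 2) K) ^ (e k).1 * X 1 ^ (e k).2) ^ (cf α k)
          = X 0 ^ ((e k).1 * (cf α k)) * X 1 ^ ((e k).2 * (cf α k)) := by
        intro k
        rw [mul_pow, pow_mul, pow_mul]
      rw [Finset.prod_congr rfl (fun k _ => h1 k), Finset.prod_mul_distrib,
        Finset.prod_pow_eq_pow_sum, Finset.prod_pow_eq_pow_sum]
      have e1 : ∑ k, (e k).1 * (cf α k) = α 0 := by
        rw [← (hcf α hα).2.1]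
        exact Finset.sum_congr rfl (fun k _ => mul_comm _ _)
      have e2 : ∑ k, (e k).2 * (cf α k) = α 1 := by
        rw [← (hcf α hα).2.2]
        exact Finset.sum_congr rfl (fun k _ => mul_comm _ _)
      rw [e1, e2]
    rw [hprod, MvPolynomial.algebraMap_eq, mono_eq]
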